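/- Let F₁, F₂ be points in the Euclidean plane and set f = dist F₁ F₂ / 2. Let a₁, a₂ be real numbers with f < a₁ ≤ a₂, and let E₁ = {P : dist P F₁ + dist P F₂ = 2a₁} and E₂ = {P : dist P F₁ + dist P F₂ = 2a₂}. Then the Hausdorff distance between E₁ and E₂ is at most the difference of the semi-minor axes: d_H(E₁, E₂) ≤ √(a₂² − f²) − √(a₁² − f²). -/

import Mathlib

lemma ellipse_coords (f a x y : ℝ) (hf : 0 ≤ f) (ha : f < a)
    (h : Real.sqrt ((x+f)^2 + y^2) + Real.sqrt ((x-f)^2 + y^2) = 2*a) :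
    x^2/a^2 + y^2/(a^2 - f^2) = 1 := by
  have ha0 : 0 < a := hf.trans_lt ha
  set r₁ := Real.sqrt ((x+f)^2 + y^2) with hr₁
  set r₂ := Real.sqrt ((x-f)^2 + y^2) with hr₂
  have h1 : r₁^2 = (x+f)^2 + y^2 := Real.sq_sqrt (by positivity)
  have h2 : r₂^2 = (x-f)^2 + y^2 := Real.sq_sqrt (by positivity)
  have hs : (r₁ - r₂) * (2*a) = 4*(f*x) := by
    rw [← h]; linear_combination h1 - h2
  have hr1 : r₁ = a + f*x/a := by
    field_simp
    linear_combination hs/4 + a*h/2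
  have key : (a + f*x/a)^2 = (x+f)^2 + y^2 := by rw [← hr1]; exact h1
  have hne : a^2 - f^2 ≠ 0 := by nlinarith
  field_simp at key ⊢
  nlinarith [key]

lemma ellipse_sum (f a x y : ℝ) (hf : 0 ≤ f) (ha : f < a)
    (h : x^2/a^2 + y^2/(a^2 - f^2) = 1) :
    Real.sqrt ((x+f)^2 + y^2) + Real.sqrt ((x-f)^2 + y^2) = 2*a := by
  have ha0 : 0 < a := hf.trans_lt ha
  have hbf : 0 < a^2 - f^2 := by nlinarith
  have hxy : y^2 * a^2 = (a^2 - f^2) * (a^2 - x^2) := by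
    field_simp at h
    linear_combination h
  have hx2 : x^2 ≤ a^2 := by nlinarith [sq_nonneg y]
  have hxa : |x| ≤ a := by rw [abs_le]; constructor <;> nlinarith
  have hfx : |f*x/a| ≤ f := by
    rw [abs_div, abs_mul, abs_of_nonneg hf, abs_of_pos ha0, div_le_iff₀ ha0]
    nlinarith [abs_nonneg x]
  have p1 : 0 ≤ a + f*x/a := by have := abs_le.mp hfx; linarith
  have p2 : 0 ≤ a - f*x/a := by have := abs_le.mp hfx; linarith
  have e1 : (x+f)^2 + y^2 = (a + f*x/a)^2 := by
    field_simp; linear_combination hxy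
  have e2 : (x-f)^2 + y^2 = (a - f*x/a)^2 := by
    field_simp; linear_combination hxy
  rw [e1, e2, Real.sqrt_sq p1, Real.sqrt_sq p2]; ring

lemma key_ineq (f a a' : ℝ) (hf : 0 ≤ f) (ha : f < a) (ha' : f < a') :
    (a' - a)^2 ≤ (Real.sqrt (a'^2 - f^2) - Real.sqrt (a^2 - f^2))^2 := by
  have ha0 : 0 < a := hf.trans_lt ha
  have ha'0 : 0 < a' := hf.trans_lt ha'
  set b := Real.sqrt (a^2 - f^2) with hb
  set b' := Real.sqrt (a'^2 - f^2) with hb'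
  have hb2 : b^2 = a^2 - f^2 := Real.sq_sqrt (by nlinarith)
  have hb'2 : b'^2 = a'^2 - f^2 := Real.sq_sqrt (by nlinarith)
  have hb0 : 0 < b := Real.sqrt_pos.mpr (by nlinarith)
  have hb'0 : 0 < b' := Real.sqrt_pos.mpr (by nlinarith)
  have hbb : b*b' ≤ a*a' - f^2 := by
    have hsq : (b*b')^2 ≤ (a*a' - f^2)^2 := by
      have h3 : (b*b')^2 = (a^2-f^2)*(a'^2-f^2) := by rw [mul_pow, hb2, hb'2]
      rw [h3]; nlinarith [sq_nonneg (a - a'), sq_nonneg f]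
    have hpos : 0 ≤ a*a' - f^2 := by nlinarith
    nlinarith [mul_pos hb0 hb'0]
  nlinarith [hb2, hb'2, hbb]

lemma confocal_step {E : Type*} [NormedAddCommGroup E] [InnerProductSpace ℝ E]
    (c u : E) (hu : ‖u‖ = 1) {f a a' : ℝ} (hf : 0 ≤ f) (ha : f < a) (ha' : f < a')
    (P : E) (hP : dist P (c - f • u) + dist P (c + f • u) = 2 * a) :
    ∃ Q : E, dist Q (c - f • u) + dist Q (c + f • u) = 2 * a' ∧
      dist P Q ≤ |Real.sqrt (a' ^ 2 - f ^ 2) - Real.sqrt (a ^ 2 - f ^ 2)| := by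
  have ha0 : 0 < a := hf.trans_lt ha
  have ha'0 : 0 < a' := hf.trans_lt ha'
  set b := Real.sqrt (a^2 - f^2) with hbdef
  set b' := Real.sqrt (a'^2 - f^2) with hb'def
  have hb2 : b^2 = a^2 - f^2 := Real.sq_sqrt (by nlinarith)
  have hb'2 : b'^2 = a'^2 - f^2 := Real.sq_sqrt (by nlinarith)
  have hb0 : 0 < b := Real.sqrt_pos.mpr (by nlinarith)
  have hb'0 : 0 < b' := Real.sqrt_pos.mpr (by nlinarith)
  set x : ℝ := inner ℝ (P - c) u with hxdef
  set w := P - c - x • u with hwdef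
  have huu : (inner ℝ u (u) : ℝ) = 1 := by
    rw [real_inner_self_eq_norm_sq, hu]; norm_num
  have hwu : (inner ℝ u (w) : ℝ) = 0 := by
    rw [hwdef, inner_sub_right, inner_smul_right, huu, real_inner_comm, ← hxdef]
    ring
  have hnorm : ∀ (s : ℝ) (v : E), (inner ℝ u (v) : ℝ) = 0 → ‖s • u + v‖ = Real.sqrt (s^2 + ‖v‖^2) := by
    intro s v hv
    rw [← Real.sqrt_sq (norm_nonneg _)]
    congr 1
    rw [@norm_add_sq_real, real_inner_smul_left, hv, norm_smul, Real.norm_eq_abs,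
      mul_pow, sq_abs, hu]
    ring
  have hPc : P - c = x • u + w := by rw [hwdef]; abel
  have d1 : ∀ (R : E) (s : ℝ) (v : E), R - c = s • u + v → (inner ℝ u (v) : ℝ) = 0 →
      dist R (c - f • u) = Real.sqrt ((s+f)^2 + ‖v‖^2) ∧
      dist R (c + f • u) = Real.sqrt ((s-f)^2 + ‖v‖^2) := by
    intro R s v hR hv
    constructor
    · rw [dist_eq_norm]
      have h' : R - (c - f • u) = (s + f) • u + v := by
        have : R - (c - f • u) = (R - c) + f • u := by abel
        rw [this, hR, add_smul]; abel
      rw [h', hnorm _ _ hv]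
    · rw [dist_eq_norm]
      have h' : R - (c + f • u) = (s - f) • u + v := by
        have : R - (c + f • u) = (R - c) - f • u := by abel
        rw [this, hR, sub_smul]; abel
      rw [h', hnorm _ _ hv]
  obtain ⟨e1, e2⟩ := d1 P x w hPc hwu
  rw [e1, e2] at hP
  have hco : x^2/a^2 + ‖w‖^2/(a^2 - f^2) = 1 := ellipse_coords f a x ‖w‖ hf ha hP
  refine ⟨c + ((a'/a) * x) • u + (b'/b) • w, ?_, ?_⟩
  · have hVu : (inner ℝ u ((b'/b) • w) : ℝ) = 0 := by rw [inner_smul_right, hwu]; ring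
    obtain ⟨g1, g2⟩ := d1 (c + ((a'/a) * x) • u + (b'/b) • w) ((a'/a) * x) ((b'/b) • w)
      (by abel) hVu
    have hnv : ‖(b'/b) • w‖^2 = ((b'/b) * ‖w‖)^2 := by
      rw [norm_smul, Real.norm_eq_abs, mul_pow, mul_pow, sq_abs]
    rw [g1, g2, hnv]
    apply ellipse_sum f a' _ _ hf ha'
    have t1 : ((a'/a) * x)^2 / a'^2 = x^2 / a^2 := by
      field_simp
    have t2 : ((b'/b) * ‖w‖)^2 / (a'^2 - f^2) = ‖w‖^2 / (a^2 - f^2) := by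
      rw [← hb2, ← hb'2]; field_simp
    rw [t1, t2]; exact hco
  · have hPQ : P - (c + ((a'/a) * x) • u + (b'/b) • w)
        = (x - (a'/a) * x) • u + (1 - b'/b) • w := by
      have h' : P - (c + ((a'/a) * x) • u + (b'/b) • w)
          = (P - c) - ((a'/a) * x) • u - (b'/b) • w := by abel
      rw [h', hPc, sub_smul, sub_smul, one_smul]; abel
    have hv0 : (inner ℝ u ((1 - b'/b) • w) : ℝ) = 0 := by rw [inner_smul_right, hwu]; ring
    rw [dist_eq_norm, hPQ, hnorm _ _ hv0]
    rw [← Real.sqrt_sq_eq_abs]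
    apply Real.sqrt_le_sqrt
    have key : (a' - a)^2 ≤ (b' - b)^2 := key_ineq f a a' hf ha ha'
    have e3 : (x - (a'/a) * x)^2 = (a' - a)^2 * (x^2 / a^2) := by
      field_simp; ring
    have e4 : ‖(1 - b'/b) • w‖^2 = (b' - b)^2 * (‖w‖^2 / b^2) := by
      rw [norm_smul, Real.norm_eq_abs, mul_pow, sq_abs]
      have hq : (1 - b'/b)^2 = (b' - b)^2 / b^2 := by field_simp; ring
      rw [hq]; ring
    rw [e3, e4]
    have hx2 : (0:ℝ) ≤ x^2 / a^2 := by positivity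
    have hw2 : (0:ℝ) ≤ ‖w‖^2 / b^2 := by positivity
    have hsum : x^2/a^2 + ‖w‖^2/b^2 = 1 := by rw [hb2]; exact hco
    have hmul := mul_le_mul_of_nonneg_right key hx2
    have hsplit : (b'-b)^2 * (x^2/a^2) + (b'-b)^2 * (‖w‖^2/b^2) = (b'-b)^2 := by
      rw [← mul_add, hsum, mul_one]
    linarith

/-- The Hausdorff distance between two confocal ellipses is at most the difference of
their semi-minor axes. -/
theorem hausdorffDist_confocal_le_semi_minor_diff
    (F₁ F₂ : EuclideanSpace ℝ (Fin 2)) (f a₁ a₂ : ℝ)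
    (hf : f = dist F₁ F₂ / 2) (h₁ : f < a₁) (h₁₂ : a₁ ≤ a₂) :
    Metric.hausdorffDist
        {P : EuclideanSpace ℝ (Fin 2) | dist P F₁ + dist P F₂ = 2 * a₁}
        {P : EuclideanSpace ℝ (Fin 2) | dist P F₁ + dist P F₂ = 2 * a₂}
      ≤ Real.sqrt (a₂ ^ 2 - f ^ 2) - Real.sqrt (a₁ ^ 2 - f ^ 2) := by
  have hf0 : 0 ≤ f := by rw [hf]; positivity
  have h₂ : f < a₂ := lt_of_lt_of_le h₁ h₁₂
  -- get a unit vector u with (2*f) • u = F₂ - F₁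
  obtain ⟨u, hu, huv⟩ : ∃ u : EuclideanSpace ℝ (Fin 2),
      ‖u‖ = 1 ∧ (2 * f) • u = F₂ - F₁ := by
    by_cases hFF : F₁ = F₂
    · refine ⟨EuclideanSpace.single 0 1, ?_, ?_⟩
      · simp [EuclideanSpace.norm_single]
      · have : f = 0 := by rw [hf, hFF]; simp
        rw [this, hFF]; simp
    · have hnv : ‖F₂ - F₁‖ ≠ 0 := by
        simp only [ne_eq, norm_eq_zero, sub_eq_zero]
        exact fun h => hFF h.symm
      refine ⟨‖F₂ - F₁‖⁻¹ • (F₂ - F₁), ?_, ?_⟩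
      · rw [norm_smul, norm_inv, norm_norm, inv_mul_cancel₀ hnv]
      · rw [smul_smul]
        have h2f : 2 * f = ‖F₂ - F₁‖ := by
          rw [hf, dist_eq_norm, ← norm_neg]; ring_nf; congr 1; abel
        rw [h2f, mul_inv_cancel₀ hnv, one_smul]
  set c := F₁ + f • u with hc
  have hF₁ : c - f • u = F₁ := by rw [hc]; abel
  have hF₂ : c + f • u = F₂ := by
    have h2 : f • u + f • u = F₂ - F₁ := by rw [← huv, two_mul, add_smul]
    rw [hc, add_assoc, h2]; abel
  have key : (0:ℝ) ≤ Real.sqrt (a₂^2 - f^2) - Real.sqrt (a₁^2 - f^2) := by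
    have := Real.sqrt_le_sqrt (show a₁^2 - f^2 ≤ a₂^2 - f^2 by nlinarith)
    linarith
  apply Metric.hausdorffDist_le_of_mem_dist key
  · intro P hP
    obtain ⟨Q, hQ, hd⟩ := confocal_step c u hu hf0 h₁ h₂ P (by rw [hF₁, hF₂]; exact hP)
    refine ⟨Q, by rw [← hF₁, ← hF₂]; exact hQ, ?_⟩
    rwa [abs_of_nonneg key] at hd
  · intro P hP
    obtain ⟨Q, hQ, hd⟩ := confocal_step c u hu hf0 h₂ h₁ P (by rw [hF₁, hF₂]; exact hP)
    refine ⟨Q, by rw [← hF₁, ← hF₂]; exact hQ, ?_⟩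
    rw [abs_sub_comm, abs_of_nonneg key] at hd
    exact hd
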